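/- Bernstein inequality: if f is a tempered distribution on ℝ^d whose Fourier transform is supported in the annulus {A₁2^j ≤ |ξ| ≤ A₂2^j}, then for all 1 ≤ p ≤ q ≤ ∞, ‖f‖_{L^q} ≤ C 2^{dj(1/p − 1/q)} ‖f‖_{L^p}, with C independent of f and j. -/

import Mathlib

noncomputable section
open MeasureTheory
open scoped ENNReal

variable {d : ℕ}

/-- Fourier transform on ℝ^d, angular frequency convention. -/
def ftn (f : EuclideanSpace ℝ (Fin d) → ℂ) (ξ : EuclideanSpace ℝ (Fin d)) : ℂ :=
  ∫ x, Complex.exp (-Complex.I * ((inner ℝ x ξ : ℝ) : ℂ)) * f x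

/-- Inverse Fourier transform on ℝ^d, angular frequency convention. -/
def iftn (f : EuclideanSpace ℝ (Fin d) → ℂ) (x : EuclideanSpace ℝ (Fin d)) : ℂ :=
  (((2 * Real.pi) ^ d)⁻¹ : ℝ) • ∫ ξ, Complex.exp (Complex.I * ((inner ℝ x ξ : ℝ) : ℂ)) * f ξ

/-- Homogeneous dyadic block `Δ̇_j f = ψ(2^{-j}D) f`. -/
def dyadicBlock (ψ : EuclideanSpace ℝ (Fin d) → ℝ) (j : ℤ)
    (f : EuclideanSpace ℝ (Fin d) → ℂ) : EuclideanSpace ℝ (Fin d) → ℂ :=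
  iftn (fun ξ => ((ψ ((2 : ℝ) ^ (-j) • ξ) : ℝ) : ℂ) * ftn f ξ)

/-- The `ℓ^r(ℤ)` norm of a family of extended nonnegative reals. -/
def lrNorm (r : ℝ≥0∞) (a : ℤ → ℝ≥0∞) : ℝ≥0∞ :=
  if r = ∞ then ⨆ j, a j else (∑' j, a j ^ r.toReal) ^ (1 / r.toReal)

/-- Homogeneous Besov norm `‖f‖_{Ḃ^s_{p,r}}` built from the Littlewood–Paley
function `ψ`. -/
def besovNorm (ψ : EuclideanSpace ℝ (Fin d) → ℝ) (s : ℝ) (p r : ℝ≥0∞)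
    (f : EuclideanSpace ℝ (Fin d) → ℂ) : ℝ≥0∞ :=
  lrNorm r (fun j =>
    ENNReal.ofReal ((2 : ℝ) ^ ((j : ℝ) * s)) * eLpNorm (dyadicBlock ψ j f) p volume)

section BernsteinAux

open scoped FourierTransform RealInnerProductSpace
open Real Complex Filter

variable {V : Type*} [NormedAddCommGroup V] [InnerProductSpace ℝ V]
  [FiniteDimensional ℝ V] [MeasurableSpace V] [BorelSpace V]

/-- A smooth compactly supported function is a Schwartz function. -/
def csToSchwartz {E : Type*} [NormedAddCommGroup E] [NormedSpace ℝ E]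
    (φ : V → E) (h1 : ContDiff ℝ ((⊤ : ℕ∞) : WithTop ℕ∞) φ) (h2 : HasCompactSupport φ) : SchwartzMap V E where
  toFun := φ
  smooth' := h1
  decay' := by
    intro k n
    have hcont : Continuous fun x => ‖x‖ ^ k * ‖iteratedFDeriv ℝ n φ x‖ :=
      ((continuous_norm.pow k).mul
        ((h1.continuous_iteratedFDeriv (by exact_mod_cast le_top)).norm))
    have hcs : HasCompactSupport fun x => ‖x‖ ^ k * ‖iteratedFDeriv ℝ n φ x‖ := by
      apply HasCompactSupport.mul_left
      exact (h2.iteratedFDeriv n).norm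
    obtain ⟨C, hC⟩ := hcont.bounded_above_of_compact_support hcs
    exact ⟨C, fun x => (Real.le_norm_self _).trans (hC x)⟩

theorem mult_formula (f g : V → ℂ) (hf : Integrable f volume) (hg : Integrable g volume) :
    ∫ ξ, 𝓕 f ξ * g ξ = ∫ x, f x * 𝓕 g x := by
  have := VectorFourier.integral_fourierIntegral_smul_eq_flip (L := innerₗ V)
    Real.continuous_fourierChar continuous_inner hf hg
  simp only [smul_eq_mul] at this
  rw [show 𝓕 f = VectorFourier.fourierIntegral Real.fourierChar volume (innerₗ V) f from rfl,
    show 𝓕 g = VectorFourier.fourierIntegral Real.fourierChar volume (innerₗ V) g from rfl]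
  simpa [mul_comm] using this

set_option maxHeartbeats 1000000 in
theorem ae_fourier_inversion {f : V → ℂ} (hf : Integrable f volume)
    (h'f : Integrable (𝓕 f) volume) : f =ᵐ[volume] 𝓕⁻ (𝓕 f) := by
  have hcont : Continuous (𝓕⁻ (𝓕 f)) := by
    rw [fourierInv_eq_fourier_comp_neg]
    exact VectorFourier.fourierIntegral_continuous Real.continuous_fourierChar
      continuous_inner (h'f.comp_neg)
  apply ae_eq_of_integral_contDiff_smul_eq hf.locallyIntegrable hcont.locallyIntegrable
  intro g hg1 hg2
  set φ : V → ℂ := fun x => (g x : ℂ) with hφ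
  have hφc : Continuous φ := Complex.continuous_ofReal.comp hg1.continuous
  have hφcs : HasCompactSupport φ := hg2.comp_left (g := Complex.ofReal) (by simp)
  set gS : SchwartzMap V ℂ := csToSchwartz φ
    (Complex.ofRealCLM.contDiff.comp hg1) hφcs with hgS
  have hφi : Integrable φ volume := gS.integrable (μ := volume)
  have hFφi : Integrable (𝓕 φ) volume := by
    exact (SchwartzMap.fourierTransformCLM ℂ gS).integrable (μ := volume)
  have hIφi : Integrable (𝓕⁻ φ) volume := by
    have h2 := ((FourierTransform.fourierCLE ℂ (SchwartzMap V ℂ)).symm gS).integrable (μ := volume)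
    rwa [SchwartzMap.fourierTransformCLE_symm_apply, SchwartzMap.fourierInv_coe] at h2
  have inv_φ : 𝓕 (𝓕⁻ φ) = φ := hφc.fourier_fourierInv_eq hφi hFφi
  have key : ∫ x, φ x * f x = ∫ x, φ x * 𝓕⁻ (𝓕 f) x := by
    have hφn : Integrable (fun x => φ (-x)) volume := hφi.comp_neg
    calc ∫ x, φ x * f x = ∫ x, f x * 𝓕 (𝓕⁻ φ) x := by rw [inv_φ]; simp_rw [mul_comm]
    _ = ∫ ξ, 𝓕 f ξ * (𝓕⁻ φ) ξ := (mult_formula f (𝓕⁻ φ) hf hIφi).symm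
    _ = ∫ ξ, (𝓕 (fun x => φ (-x))) ξ * 𝓕 f ξ := by
        rw [← fourierInv_eq_fourier_comp_neg]
        simp_rw [mul_comm]
    _ = ∫ x, φ (-x) * 𝓕 (𝓕 f) x := mult_formula (fun x => φ (-x)) (𝓕 f) hφn h'f
    _ = ∫ x, φ x * 𝓕 (𝓕 f) (-x) := by
        rw [← integral_neg_eq_self (fun x => φ x * (𝓕 (𝓕 f) : V → ℂ) (-x)) volume]
        simp
    _ = ∫ x, φ x * 𝓕⁻ (𝓕 f) x := by
        congr 1; ext x
        rw [fourierInv_eq_fourier_neg]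
  simpa [hφ, Complex.real_smul] using key

theorem interp_lemma {α : Type*} [MeasurableSpace α] {μ : Measure α} {f : α → ℂ}
    (hf : AEStronglyMeasurable f μ) {p q : ℝ≥0∞} (hp : p ≠ 0) (hpq : p ≤ q)
    (hpt : p ≠ ∞) (hq : q ≠ ∞) :
    eLpNorm f q μ ≤ eLpNormEssSup f μ ^ (1 - p.toReal / q.toReal) *
      eLpNorm f p μ ^ (p.toReal / q.toReal) := by
  set s := p.toReal with hs
  set t := q.toReal with ht
  have hq0 : q ≠ 0 := fun h => hp (le_antisymm (h ▸ hpq) zero_le)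
  have hs0 : 0 < s := ENNReal.toReal_pos hp hpt
  have ht0 : 0 < t := ENNReal.toReal_pos hq0 hq
  have hst : s ≤ t := ENNReal.toReal_mono hq hpq
  set A := eLpNormEssSup f μ with hA
  have hae : ∀ᵐ x ∂μ, (‖f x‖₊ : ℝ≥0∞) ≤ A := enorm_ae_le_eLpNormEssSup f μ
  have hbound : ∫⁻ x, (‖f x‖₊ : ℝ≥0∞) ^ t ∂μ ≤ A ^ (t - s) * ∫⁻ x, (‖f x‖₊ : ℝ≥0∞) ^ s ∂μ := by
    rw [← lintegral_const_mul'' _ (hf.nnnorm.aemeasurable.coe_nnreal_ennreal.pow_const s)]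
    refine lintegral_mono_ae ?_
    filter_upwards [hae] with x hx
    calc (‖f x‖₊ : ℝ≥0∞) ^ t = (‖f x‖₊ : ℝ≥0∞) ^ (t - s) * (‖f x‖₊ : ℝ≥0∞) ^ s := by
          rw [← ENNReal.rpow_add_of_nonneg _ _ (by linarith) hs0.le, sub_add_cancel]
    _ ≤ A ^ (t - s) * (‖f x‖₊ : ℝ≥0∞) ^ s :=
          mul_le_mul_left (ENNReal.rpow_le_rpow hx (by linarith)) _
  rw [eLpNorm_eq_lintegral_rpow_enorm_toReal hq0 hq, eLpNorm_eq_lintegral_rpow_enorm_toReal hp hpt]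
  rw [← hs, ← ht]
  calc (∫⁻ x, (‖f x‖₊ : ℝ≥0∞) ^ t ∂μ) ^ (1 / t)
      ≤ (A ^ (t - s) * ∫⁻ x, (‖f x‖₊ : ℝ≥0∞) ^ s ∂μ) ^ (1 / t) :=
        ENNReal.rpow_le_rpow hbound (by positivity)
    _ = A ^ (1 - s / t) * ((∫⁻ x, (‖f x‖₊ : ℝ≥0∞) ^ s ∂μ) ^ (1 / s)) ^ (s / t) := by
        rw [ENNReal.mul_rpow_of_nonneg _ _ (by positivity), ← ENNReal.rpow_mul,
          ← ENNReal.rpow_mul]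
        congr 1
        · congr 1
          field_simp
        · congr 1
          field_simp

theorem lintegral_comp_smul' (g : V → ℝ≥0∞) (hg : Measurable g) {R : ℝ} (hR : R ≠ 0) :
    ∫⁻ x, g (R • x) = ENNReal.ofReal |(R ^ Module.finrank ℝ V)⁻¹| * ∫⁻ x, g x := by
  have h1 : ∫⁻ x, g (R • x) = ∫⁻ y, g y ∂(Measure.map (R • ·) volume) :=
    (lintegral_map hg (measurable_const_smul R)).symm
  rw [h1, Measure.map_addHaar_smul volume hR, lintegral_smul_measure, smul_eq_mul]

theorem rpow_le_max_one {a : ℝ≥0∞} {e : ℝ} (he0 : 0 ≤ e) (he1 : e ≤ 1) :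
    a ^ e ≤ max a 1 := by
  rcases le_total a 1 with ha | ha
  · calc a ^ e ≤ 1 ^ e := ENNReal.rpow_le_rpow ha he0
    _ = 1 := ENNReal.one_rpow e
    _ ≤ max a 1 := le_max_right _ _
  · calc a ^ e ≤ a ^ (1:ℝ) := ENNReal.rpow_le_rpow_of_exponent_le ha he1
    _ = a := ENNReal.rpow_one a
    _ ≤ max a 1 := le_max_left _ _

theorem schwartz_eLpNorm_bound (Φ : SchwartzMap V ℂ) :
    ∃ C₀ : ℝ, 0 < C₀ ∧ ∀ r : ℝ≥0∞, 1 ≤ r → eLpNorm (⇑Φ) r volume ≤ ENNReal.ofReal C₀ := by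
  set D : ℕ := Module.finrank ℝ V + 1 with hD
  obtain ⟨M, hM0, hM⟩ : ∃ M : ℝ, 0 < M ∧ ∀ x, ‖Φ x‖ ≤ M * (1 + ‖x‖) ^ (-(D:ℝ)) := by
    have h := fun x : V => Φ.one_add_le_sup_seminorm_apply (𝕜 := ℝ) (m := ((D : ℕ),(0 : ℕ)))
      le_rfl le_rfl x
    simp only [norm_iteratedFDeriv_zero] at h
    set B : ℝ := 2 ^ ((D : ℕ),(0 : ℕ)).1 * ((Finset.Iic ((D : ℕ),(0 : ℕ))).sup
      (fun m => SchwartzMap.seminorm ℝ m.1 m.2)) Φ with hB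
    have hB0 : 0 ≤ B := by
      have h0 := h 0
      have : (0:ℝ) ≤ (1 + ‖(0:V)‖) ^ ((D : ℕ),(0 : ℕ)).1 * ‖Φ 0‖ := by positivity
      linarith
    refine ⟨B + 1, by linarith, fun x => ?_⟩
    have h := h x
    have hx0 : (0:ℝ) < 1 + ‖x‖ := by positivity
    have hpow : (1 + ‖x‖) ^ (-(D:ℝ)) = ((1 + ‖x‖) ^ (D:ℕ))⁻¹ := by
      rw [Real.rpow_neg hx0.le, Real.rpow_natCast]
    have hpos : (0:ℝ) < (1 + ‖x‖) ^ (D:ℕ) := by positivity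
    rw [hpow, mul_comm (B+1), le_inv_mul_iff₀ hpos]
    linarith [h]
  have hD' : (Module.finrank ℝ V : ℝ) < (D : ℝ) := by
    rw [hD]; exact_mod_cast lt_add_one _
  have hKint : Integrable (fun x : V => (1 + ‖x‖) ^ (-(D:ℝ))) volume :=
    integrable_one_add_norm hD'
  set K : ℝ := ∫ x : V, (1 + ‖x‖) ^ (-(D:ℝ)) with hK
  have hh1 : ∀ x : V, (1 + ‖x‖) ^ (-(D:ℝ)) ≤ 1 := fun x =>
    Real.rpow_le_one_of_one_le_of_nonpos (le_add_of_nonneg_right (norm_nonneg x))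
      (neg_nonpos.mpr (Nat.cast_nonneg D))
  have hhnn : ∀ x : V, 0 ≤ (1 + ‖x‖) ^ (-(D:ℝ)) := fun x => Real.rpow_nonneg (by positivity) _
  refine ⟨M * max K 1, by positivity, fun r hr => ?_⟩
  have hmono : eLpNorm (⇑Φ) r volume ≤
      eLpNorm (fun x : V => M * (1 + ‖x‖) ^ (-(D:ℝ))) r volume :=
    eLpNorm_mono_real hM
  refine hmono.trans ?_
  have hmax1 : (1:ℝ) ≤ max K 1 := le_max_right _ _
  rcases eq_or_ne r ∞ with rfl | hrt
  · rw [eLpNorm_exponent_top]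
    refine (eLpNormEssSup_le_of_ae_bound (C := M) ?_).trans ?_
    · filter_upwards with x
      rw [Real.norm_eq_abs, _root_.abs_of_nonneg (by positivity)]
      calc M * (1 + ‖x‖) ^ (-(D:ℝ)) ≤ M * 1 := by
            exact mul_le_mul_of_nonneg_left (hh1 x) hM0.le
      _ = M := mul_one M
    · apply ENNReal.ofReal_le_ofReal
      nlinarith
  · have hr0 : r ≠ 0 := fun h => by simp [h] at hr
    set r' : ℝ := r.toReal with hr'
    have hr'1 : 1 ≤ r' := by
      rw [hr']
      exact ENNReal.toReal_one ▸ ENNReal.toReal_mono hrt hr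
    have hr'0 : 0 < r' := lt_of_lt_of_le one_pos hr'1
    rw [eLpNorm_eq_lintegral_rpow_enorm_toReal hr0 hrt, ← hr']
    have hptw : ∀ x : V, (‖M * (1 + ‖x‖) ^ (-(D:ℝ))‖₊ : ℝ≥0∞) ^ r' ≤
        ENNReal.ofReal M ^ r' * ENNReal.ofReal ((1 + ‖x‖) ^ (-(D:ℝ))) := by
      intro x
      have : (‖M * (1 + ‖x‖) ^ (-(D:ℝ))‖₊ : ℝ≥0∞) =
          ENNReal.ofReal M * ENNReal.ofReal ((1 + ‖x‖) ^ (-(D:ℝ))) := by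
        rw [← ENNReal.ofReal_mul hM0.le, ← enorm_eq_nnnorm, ← ofReal_norm,
          Real.norm_eq_abs, _root_.abs_of_nonneg (by positivity)]
      rw [this, ENNReal.mul_rpow_of_nonneg _ _ (by positivity)]
      refine mul_le_mul_right ?_ _
      calc ENNReal.ofReal ((1 + ‖x‖) ^ (-(D:ℝ))) ^ r'
          ≤ ENNReal.ofReal ((1 + ‖x‖) ^ (-(D:ℝ))) ^ (1:ℝ) := by
            apply ENNReal.rpow_le_rpow_of_exponent_ge _ hr'1
            · exact ENNReal.ofReal_le_one.mpr (hh1 x)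
      _ = _ := ENNReal.rpow_one _
    calc (∫⁻ x, (‖M * (1 + ‖x‖) ^ (-(D:ℝ))‖₊ : ℝ≥0∞) ^ r') ^ (1/r')
        ≤ (∫⁻ x : V, ENNReal.ofReal M ^ r' * ENNReal.ofReal ((1 + ‖x‖) ^ (-(D:ℝ)))) ^ (1/r') :=
          ENNReal.rpow_le_rpow (lintegral_mono hptw) (by positivity)
      _ = (ENNReal.ofReal M ^ r' * ENNReal.ofReal K) ^ (1/r') := by
          rw [lintegral_const_mul' _ _ (by
            exact ENNReal.rpow_ne_top_of_nonneg (by positivity) ENNReal.ofReal_ne_top),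
            ofReal_integral_eq_lintegral_ofReal hKint (Filter.Eventually.of_forall hhnn)]
      _ = ENNReal.ofReal M * ENNReal.ofReal K ^ (1/r') := by
          rw [ENNReal.mul_rpow_of_nonneg _ _ (by positivity), ← ENNReal.rpow_mul,
            mul_one_div_cancel hr'0.ne', ENNReal.rpow_one]
      _ ≤ ENNReal.ofReal M * ENNReal.ofReal (max K 1) := by
          refine mul_le_mul_right ?_ _
          refine (rpow_le_max_one (by positivity) ?_).trans ?_
          · rw [div_le_one hr'0]; linarith
          · rw [max_le_iff]
            constructor
            · exact ENNReal.ofReal_le_ofReal (le_max_left _ _)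
            · rw [← ENNReal.ofReal_one]
              exact ENNReal.ofReal_le_ofReal hmax1
      _ = ENNReal.ofReal (M * max K 1) := by rw [← ENNReal.ofReal_mul hM0.le]

theorem fourier_modulation (w : V → ℂ) (x v : V) :
    𝓕 (fun ξ => (Real.fourierChar ⟪ξ, x⟫ : Circle) • w ξ) v = 𝓕 w (v - x) := by
  rw [Real.fourier_eq, Real.fourier_eq]
  congr 1
  ext ξ
  rw [smul_smul, ← AddChar.map_add_eq_mul]
  congr 2
  rw [inner_sub_right]
  ring

theorem fourier_comp_inv_smul (Ψ : V → ℂ) {R : ℝ} (hR : 0 < R) (z : V) :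
    𝓕 (fun ξ => Ψ (R⁻¹ • ξ)) z = (R ^ Module.finrank ℝ V : ℝ) • 𝓕 Ψ (R • z) := by
  rw [Real.fourier_eq, Real.fourier_eq]
  have key := Measure.integral_comp_smul (μ := volume)
    (f := fun u => (Real.fourierChar (-⟪u, R • z⟫) : Circle) • Ψ u) R⁻¹
  have h1 : ∀ v : V, (Real.fourierChar (-⟪R⁻¹ • v, R • z⟫) : Circle) • Ψ (R⁻¹ • v)
      = (Real.fourierChar (-⟪v, z⟫) : Circle) • Ψ (R⁻¹ • v) := by
    intro v
    congr 2
    rw [real_inner_smul_left, real_inner_smul_right, ← mul_assoc,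
      inv_mul_cancel₀ hR.ne', one_mul]
  simp only [h1] at key
  rw [key]
  have h2 : |((R⁻¹) ^ Module.finrank ℝ V)⁻¹| = R ^ Module.finrank ℝ V := by
    rw [← inv_pow, inv_inv, abs_of_pos (pow_pos hR _)]
  rw [h2]

set_option maxHeartbeats 1000000 in
theorem key_bound {c : ℝ} (hc : 0 < c) (χS : SchwartzMap V ℂ)
    (hχ1 : ∀ ξ : V, ‖ξ‖ ≤ c → χS ξ = 1) {C₀ : ℝ} (hC₀ : 0 < C₀)
    (hC₀b : ∀ r : ℝ≥0∞, 1 ≤ r → eLpNorm (𝓕 ⇑χS) r volume ≤ ENNReal.ofReal C₀)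
    (j : ℤ) (p : ℝ≥0∞) (hp : 1 ≤ p) (f : V → ℂ) (hf : Integrable f volume)
    (hsupp : ∀ ξ, 𝓕 f ξ ≠ 0 → ‖ξ‖ ≤ c * (2:ℝ) ^ j) :
    eLpNormEssSup f volume ≤
      ENNReal.ofReal (C₀ * (2:ℝ) ^ ((Module.finrank ℝ V : ℝ) * (j:ℝ) * (1 / p.toReal))) *
        eLpNorm f p volume := by
  set d' : ℕ := Module.finrank ℝ V with hd'
  set R : ℝ := (2:ℝ) ^ j with hRdef
  have hR : 0 < R := zpow_pos two_pos j
  -- the Fourier transform of f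
  set u : V → ℂ := 𝓕 f with hu
  have hu_cont : Continuous u :=
    VectorFourier.fourierIntegral_continuous Real.continuous_fourierChar continuous_inner hf
  have hu_cs : HasCompactSupport u := by
    apply HasCompactSupport.intro (isCompact_closedBall (0:V) (c * (2:ℝ) ^ j))
    intro ξ hξ
    by_contra h0
    exact hξ (mem_closedBall_zero_iff.mpr (hsupp ξ h0))
  have hu_int : Integrable u volume := hu_cont.integrable_of_hasCompactSupport hu_cs
  -- the multiplier
  set w : V → ℂ := fun ξ => χS (R⁻¹ • ξ) with hw
  have hw_int : Integrable w volume := by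
    rw [hw]
    exact (integrable_comp_smul_iff volume (⇑χS) (inv_ne_zero hR.ne')).mpr
      (χS.integrable (μ := volume))
  have hw_cont : Continuous w := χS.continuous.comp (continuous_const_smul _)
  have hwu : ∀ ξ, w ξ * u ξ = u ξ := by
    intro ξ
    rcases eq_or_ne (u ξ) 0 with h0 | h0
    · rw [h0, mul_zero]
    · have hle : ‖R⁻¹ • ξ‖ ≤ c := by
        rw [norm_smul, norm_inv, Real.norm_eq_abs, abs_of_pos hR]
        rw [inv_mul_le_iff₀ hR]
        calc ‖ξ‖ ≤ c * (2:ℝ) ^ j := hsupp ξ h0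
        _ = R * c := mul_comm c R
      rw [hw]
      simp only [hχ1 _ hle, one_mul]
  -- conjugate exponent
  set p' : ℝ≥0∞ := (1 - p⁻¹)⁻¹ with hp'def
  have hpinv : p⁻¹ ≤ 1 := ENNReal.inv_le_one.mpr hp
  have hconj : (1:ℝ≥0∞)/1 = 1/p' + 1/p := by
    rw [hp'def, one_div, one_div, one_div, inv_one, inv_inv, tsub_add_cancel_of_le hpinv]
  have hp'1 : 1 ≤ p' := by
    rw [hp'def]
    calc (1:ℝ≥0∞) = 1⁻¹ := by rw [inv_one]
    _ ≤ (1 - p⁻¹)⁻¹ := ENNReal.inv_le_inv' tsub_le_self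
  have hp'0 : p' ≠ 0 := by
    intro h
    rw [h] at hp'1
    exact (not_le.mpr zero_lt_one) hp'1
  -- the kernel
  set W : V → ℂ := 𝓕 w with hW
  have hW_cont : Continuous W :=
    VectorFourier.fourierIntegral_continuous Real.continuous_fourierChar continuous_inner hw_int
  -- scaling bound for the kernel
  have hrel : 1 - (1/p').toReal = 1 / p.toReal := by
    have h1 : ((1:ℝ≥0∞)/1).toReal = ((1:ℝ≥0∞)/p' + 1/p).toReal := by rw [← hconj]
    have h2 : (1:ℝ≥0∞)/p' ≠ ∞ := by
      apply ne_top_of_le_ne_top (b := (1:ℝ≥0∞))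
      · exact ENNReal.one_ne_top
      · rw [one_div]
        exact ENNReal.inv_le_one.mpr hp'1
    have h3 : (1:ℝ≥0∞)/p ≠ ∞ := by
      apply ne_top_of_le_ne_top (b := (1:ℝ≥0∞))
      · exact ENNReal.one_ne_top
      · rw [one_div]
        exact ENNReal.inv_le_one.mpr hp
    rw [ENNReal.toReal_add h2 h3] at h1
    simp only [ENNReal.toReal_div, ENNReal.toReal_one] at h1
    rw [ENNReal.toReal_div, ENNReal.toReal_one]
    have : (1:ℝ)/1 = 1 := by norm_num
    rw [this] at h1
    linarith
  have hΦ_cont : Continuous (𝓕 ⇑χS) :=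
    VectorFourier.fourierIntegral_continuous Real.continuous_fourierChar continuous_inner
      (χS.integrable (μ := volume))
  set X : ℝ := ((1:ℝ≥0∞)/p').toReal with hXdef
  have hX0 : 0 ≤ X := ENNReal.toReal_nonneg
  set E' : ℝ≥0∞ := eLpNorm (𝓕 ⇑χS) p' volume with hE'
  set T : ℝ := (2:ℝ) ^ ((j:ℝ) * (d':ℝ)) with hT
  have hT0 : 0 < T := Real.rpow_pos_of_pos two_pos _
  have hR2 : R ^ d' = T := by
    rw [hT, hRdef, ← Real.rpow_intCast 2 j, ← Real.rpow_natCast ((2:ℝ) ^ ((j:ℝ)):ℝ) d',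
      ← Real.rpow_mul (by norm_num)]
  have hWbound : eLpNorm W p' volume ≤
      ENNReal.ofReal (C₀ * (2:ℝ) ^ ((d' : ℝ) * (j:ℝ) * (1 / p.toReal))) := by
    have hWeq : W = fun z => (R ^ d' : ℝ) • (𝓕 ⇑χS) (R • z) := by
      funext z
      rw [hW, hw]
      exact fourier_comp_inv_smul (⇑χS) hR z
    have hsmul : eLpNorm W p' volume =
        (‖(R ^ d' : ℝ)‖₊ : ℝ≥0∞) * eLpNorm (fun z => (𝓕 ⇑χS) (R • z)) p' volume := by
      rw [hWeq, ← enorm_eq_nnnorm, ← eLpNorm_const_smul]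
      rfl
    have hΦm : AEStronglyMeasurable (𝓕 ⇑χS) (Measure.map (fun z : V => R • z) volume) :=
      hΦ_cont.aestronglyMeasurable
    have hmap : eLpNorm (fun z => (𝓕 ⇑χS) (R • z)) p' volume =
        eLpNorm (𝓕 ⇑χS) p' (Measure.map (fun z : V => R • z) volume) :=
      (eLpNorm_map_measure hΦm (measurable_const_smul R).aemeasurable).symm
    have hc0 : (ENNReal.ofReal |(R ^ d')⁻¹| : ℝ≥0∞) ≠ 0 := by
      simp only [ne_eq, ENNReal.ofReal_eq_zero, not_le]
      rw [abs_of_pos (by positivity)]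
      positivity
    have hsm := eLpNorm_smul_measure_of_ne_zero (μ := volume) hc0 (𝓕 ⇑χS) p'
    have hnn : (‖(R ^ d' : ℝ)‖₊ : ℝ≥0∞) = ENNReal.ofReal T := by
      rw [← enorm_eq_nnnorm, ← ofReal_norm, Real.norm_eq_abs, abs_of_pos (by positivity), hR2]
    have hfac : ENNReal.ofReal |(R ^ d')⁻¹| ^ X = ENNReal.ofReal (T ^ (-X)) := by
      have h1 : |(R ^ d')⁻¹| = T⁻¹ := by rw [abs_of_pos (by positivity), hR2]
      have h2 : (T⁻¹ : ℝ) ^ X = T ^ (-X) := by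
        rw [Real.inv_rpow hT0.le, ← Real.rpow_neg hT0.le]
      rw [h1, ← h2, ENNReal.ofReal_rpow_of_pos (by positivity)]
    calc eLpNorm W p' volume
        = ENNReal.ofReal T * (ENNReal.ofReal |(R ^ d')⁻¹| ^ X * E') := by
          rw [hsmul, hmap, Measure.map_addHaar_smul volume hR.ne', hsm, hnn, smul_eq_mul]
      _ = ENNReal.ofReal (T * T ^ (-X)) * E' := by
          rw [hfac, ← mul_assoc, ← ENNReal.ofReal_mul hT0.le]
      _ ≤ ENNReal.ofReal (T * T ^ (-X)) * ENNReal.ofReal C₀ :=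
          mul_le_mul_right (hC₀b p' hp'1) _
      _ = ENNReal.ofReal (C₀ * (2:ℝ) ^ ((d' : ℝ) * (j:ℝ) * (1 / p.toReal))) := by
          rw [← ENNReal.ofReal_mul (by positivity)]
          congr 1
          rw [mul_comm _ C₀]
          congr 1
          rw [hT, ← Real.rpow_mul (by norm_num : (0:ℝ) ≤ 2), ← Real.rpow_add two_pos]
          congr 1
          have : (d' : ℝ) * (j:ℝ) * (1 / p.toReal) = (j:ℝ) * (d':ℝ) * (1 - X) := by
            rw [hXdef, ENNReal.toReal_div, ENNReal.toReal_one] at hrel ⊢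
            rw [hrel]
            ring
          rw [this]
          ring
  have hfg : f =ᵐ[volume] 𝓕⁻ u := ae_fourier_inversion hf hu_int
  have hgx : ∀ x : V, (‖𝓕⁻ u x‖₊ : ℝ≥0∞) ≤ eLpNorm W p' volume * eLpNorm f p volume := by
    intro x
    set hx : V → ℂ := fun ξ => ((Real.fourierChar ⟪ξ, x⟫ : Circle) : ℂ) * w ξ with hhx
    have hcoe_cont : Continuous fun ξ : V => ((Real.fourierChar ⟪ξ, x⟫ : Circle) : ℂ) :=
      continuous_subtype_val.comp (Real.continuous_fourierChar.comp
        (continuous_id.inner continuous_const))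
    have hhx_int : Integrable hx volume := by
      apply hw_int.bdd_mul (c := 1) hcoe_cont.aestronglyMeasurable
      refine Filter.Eventually.of_forall fun ξ => ?_
      simp [Circle.norm_coe]
    have hrep : 𝓕⁻ u x = ∫ v, f v * W (v - x) := by
      rw [fourierInv_eq]
      have e1 : ∫ ξ, (Real.fourierChar ⟪ξ, x⟫ : Circle) • u ξ = ∫ ξ, 𝓕 f ξ * hx ξ := by
        congr 1
        funext ξ
        rw [hhx, Circle.smul_def]
        calc ((Real.fourierChar ⟪ξ, x⟫ : Circle) : ℂ) * u ξ
            = ((Real.fourierChar ⟪ξ, x⟫ : Circle) : ℂ) * (w ξ * u ξ) := by rw [hwu ξ]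
        _ = 𝓕 f ξ * (((Real.fourierChar ⟪ξ, x⟫ : Circle) : ℂ) * w ξ) := by
            rw [← hu]; ring
      rw [e1, mult_formula f hx hf hhx_int]
      congr 1
      funext v
      congr 1
      have e2 : hx = fun ξ => (Real.fourierChar ⟪ξ, x⟫ : Circle) • w ξ := by
        funext ξ
        rw [Circle.smul_def]
        rfl
      rw [e2, hW]
      exact fourier_modulation w x v
    have htrans : eLpNorm (fun v => W (v - x)) p' volume = eLpNorm W p' volume := by
      have : (fun v : V => W (v - x)) = W ∘ (fun v => v - x) := rfl
      rw [this]
      exact eLpNorm_comp_measurePreserving hW_cont.aestronglyMeasurable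
        (measurePreserving_sub_right volume x)
    calc (‖𝓕⁻ u x‖₊ : ℝ≥0∞) = (‖∫ v, f v * W (v - x)‖₊ : ℝ≥0∞) := by rw [hrep]
    _ ≤ ∫⁻ v, (‖f v * W (v - x)‖₊ : ℝ≥0∞) := enorm_integral_le_lintegral_enorm _
    _ = eLpNorm ((fun v => W (v - x)) • f) 1 volume := by
        rw [eLpNorm_one_eq_lintegral_enorm]
        congr 1
        funext v
        simp only [Pi.smul_apply', smul_eq_mul, nnnorm_mul, enorm_eq_nnnorm, ENNReal.coe_mul]
        rw [mul_comm]
    _ ≤ eLpNorm (fun v => W (v - x)) p' volume * eLpNorm f p volume :=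
        eLpNorm_smul_le_mul_eLpNorm hf.aestronglyMeasurable
          ((hW_cont.comp (continuous_sub_right x)).aestronglyMeasurable)
            (hpqr := ⟨by simpa [one_div] using hconj.symm⟩)
    _ = eLpNorm W p' volume * eLpNorm f p volume := by rw [htrans]
  calc eLpNormEssSup f volume = eLpNormEssSup (𝓕⁻ u) volume := eLpNormEssSup_congr_ae hfg
  _ ≤ eLpNorm W p' volume * eLpNorm f p volume := by
      rw [eLpNormEssSup]
      exact essSup_le_of_ae_le _ (Filter.Eventually.of_forall hgx)
  _ ≤ ENNReal.ofReal (C₀ * (2:ℝ) ^ ((d' : ℝ) * (j:ℝ) * (1 / p.toReal))) *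
        eLpNorm f p volume := mul_le_mul_left hWbound _

theorem ftn_eq_fourier (f : EuclideanSpace ℝ (Fin d) → ℂ) (w : EuclideanSpace ℝ (Fin d)) :
    𝓕 f w = ftn f ((2 * Real.pi) • w) := by
  rw [Real.fourier_eq', ftn]
  congr 1
  funext v
  rw [smul_eq_mul]
  congr 1
  rw [real_inner_smul_right]
  push_cast
  ring_nf

theorem exists_chiS (c : ℝ) (hc : 0 < c) :
    ∃ χS : SchwartzMap (EuclideanSpace ℝ (Fin d)) ℂ, ∀ ξ, ‖ξ‖ ≤ c → χS ξ = 1 := by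
  set bump : ContDiffBump (0 : EuclideanSpace ℝ (Fin d)) :=
    ⟨c, 2*c, hc, by linarith⟩ with hbump
  refine ⟨csToSchwartz (fun x => ((bump x : ℝ) : ℂ))
    (Complex.ofRealCLM.contDiff.comp (bump.contDiff (n := (⊤ : ℕ∞))))
    (bump.hasCompactSupport.comp_left (g := Complex.ofReal) (by simp)), ?_⟩
  intro ξ hξ
  have h1 : bump ξ = 1 := bump.one_of_mem_closedBall (by
    rw [Metric.mem_closedBall, dist_zero_right]
    exact hξ)
  show ((bump ξ : ℝ) : ℂ) = 1
  rw [h1]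
  norm_num

end BernsteinAux

section MainProof

open scoped FourierTransform RealInnerProductSpace
open Real Complex Filter

/-- Bernstein inequality: if `f̂` is supported in the annulus
`{A₁2^j ≤ |ξ| ≤ A₂2^j}`, then for `1 ≤ p ≤ q ≤ ∞`,
`‖f‖_{L^q} ≤ C 2^{dj(1/p - 1/q)} ‖f‖_{L^p}` with `C = C(d, A₁, A₂)`. -/
theorem stmt_13 (d : ℕ) (hd : 0 < d) (A₁ A₂ : ℝ) (hA₁ : 0 < A₁) (hA : A₁ < A₂) :
    ∃ C : ℝ, 0 < C ∧ ∀ (j : ℤ) (p q : ℝ≥0∞), 1 ≤ p → p ≤ q →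
      ∀ f : EuclideanSpace ℝ (Fin d) → ℂ, Integrable f volume →
        (∀ ξ, ftn f ξ ≠ 0 → A₁ * (2 : ℝ) ^ j ≤ ‖ξ‖ ∧ ‖ξ‖ ≤ A₂ * (2 : ℝ) ^ j) →
        eLpNorm f q volume ≤
          ENNReal.ofReal
              (C * (2 : ℝ) ^ ((d : ℝ) * (j : ℝ) * (1 / p.toReal - 1 / q.toReal))) *
            eLpNorm f p volume := by
  have hπ : (0:ℝ) < 2 * Real.pi := by positivity
  set c : ℝ := A₂ / (2 * Real.pi) with hcdef
  have hA₂ : 0 < A₂ := lt_trans hA₁ hA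
  have hc : 0 < c := by positivity
  obtain ⟨χS, hχ1⟩ := exists_chiS (d := d) c hc
  obtain ⟨C₀, hC₀, hC₀b⟩ := schwartz_eLpNorm_bound (SchwartzMap.fourierTransformCLM ℂ χS)
  set C : ℝ := max C₀ 1 with hCdef
  have hC1 : (1:ℝ) ≤ C := le_max_right _ _
  have hCpos : (0:ℝ) < C := lt_of_lt_of_le one_pos hC1
  have hCb : ∀ r : ℝ≥0∞, 1 ≤ r → eLpNorm (𝓕 ⇑χS) r volume ≤ ENNReal.ofReal C := by
    intro r hr
    have h1 := hC₀b r hr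
    rw [SchwartzMap.fourierTransformCLM_apply] at h1
    exact h1.trans (ENNReal.ofReal_le_ofReal (le_max_left _ _))
  refine ⟨C, hCpos, ?_⟩
  intro j p q hp hpq f hf hsupp
  have hd2 : Module.finrank ℝ (EuclideanSpace ℝ (Fin d)) = d := finrank_euclideanSpace_fin
  have hsupp' : ∀ ξ : EuclideanSpace ℝ (Fin d), 𝓕 f ξ ≠ 0 → ‖ξ‖ ≤ c * (2:ℝ) ^ j := by
    intro ξ h0
    rw [ftn_eq_fourier] at h0
    have h2 := (hsupp _ h0).2
    rw [norm_smul, Real.norm_eq_abs, abs_of_pos hπ] at h2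
    rw [hcdef, div_mul_eq_mul_div, le_div_iff₀ hπ]
    calc ‖ξ‖ * (2 * π) = 2 * π * ‖ξ‖ := mul_comm _ _
    _ ≤ A₂ * 2 ^ j := h2
  have hkey : ∀ p₀ : ℝ≥0∞, 1 ≤ p₀ → eLpNormEssSup f volume ≤
      ENNReal.ofReal (C * (2:ℝ) ^ ((d : ℝ) * (j:ℝ) * (1 / p₀.toReal))) *
        eLpNorm f p₀ volume := by
    intro p₀ hp₀
    have h := key_bound hc χS hχ1 hCpos hCb j p₀ hp₀ f hf hsupp'
    rwa [hd2] at h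
  rcases eq_or_ne q ∞ with rfl | hq
  · have he : 1 / p.toReal - 1 / (⊤ : ℝ≥0∞).toReal = 1 / p.toReal := by
      simp
    rw [eLpNorm_exponent_top, he]
    exact hkey p hp
  · have hpt : p ≠ ∞ := ne_top_of_le_ne_top hq hpq
    have hp0 : p ≠ 0 := by
      intro h
      rw [h] at hp
      simp at hp
    have hq0 : q ≠ 0 := fun h => hp0 (le_antisymm (h ▸ hpq) zero_le)
    set s : ℝ := p.toReal with hsdef
    set t : ℝ := q.toReal with htdef
    have hs0 : 0 < s := ENNReal.toReal_pos hp0 hpt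
    have ht0 : 0 < t := ENNReal.toReal_pos hq0 hq
    have hst : s ≤ t := ENNReal.toReal_mono hq hpq
    set N : ℝ≥0∞ := eLpNorm f p volume with hN
    rcases eq_or_ne N 0 with h0 | h0
    · have hf0 : f =ᵐ[volume] 0 := (eLpNorm_eq_zero_iff hf.aestronglyMeasurable hp0).mp h0
      rw [eLpNorm_congr_ae hf0, eLpNorm_zero]
      exact zero_le
    rcases eq_or_ne N ∞ with hI | hI
    · rw [hI, ENNReal.mul_top (by
        simp only [ne_eq, ENNReal.ofReal_eq_zero, not_le]
        positivity)]
      exact le_top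
    set θ : ℝ := 1 - s/t with hθ
    have hsdt : 0 ≤ s/t := by positivity
    have hsdt1 : s/t ≤ 1 := (div_le_one ht0).mpr hst
    have hθ0 : 0 ≤ θ := by rw [hθ]; linarith
    have hθ1 : θ ≤ 1 := by rw [hθ]; linarith
    have hinterp := interp_lemma hf.aestronglyMeasurable hp0 hpq hpt hq
    have hA := hkey p hp
    calc eLpNorm f q volume ≤ eLpNormEssSup f volume ^ θ * N ^ (s/t) := hinterp
    _ ≤ (ENNReal.ofReal (C * (2:ℝ) ^ ((d : ℝ) * (j:ℝ) * (1/s))) * N) ^ θ * N ^ (s/t) :=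
        mul_le_mul_left (ENNReal.rpow_le_rpow hA hθ0) _
    _ = ENNReal.ofReal (C * (2:ℝ) ^ ((d : ℝ) * (j:ℝ) * (1/s))) ^ θ * (N ^ θ * N ^ (s/t)) := by
        rw [ENNReal.mul_rpow_of_nonneg _ _ hθ0, mul_assoc]
    _ = ENNReal.ofReal (C * (2:ℝ) ^ ((d : ℝ) * (j:ℝ) * (1/s))) ^ θ * N := by
        congr 1
        rw [← ENNReal.rpow_add _ _ h0 hI]
        rw [hθ, sub_add_cancel, ENNReal.rpow_one]
    _ ≤ ENNReal.ofReal (C * (2:ℝ) ^ ((d : ℝ) * (j:ℝ) * (1/s - 1/t))) * N := by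
        apply mul_le_mul_left
        rw [ENNReal.ofReal_rpow_of_pos (by positivity)]
        apply ENNReal.ofReal_le_ofReal
        rw [Real.mul_rpow hCpos.le (by positivity)]
        have h2half : ((2:ℝ) ^ ((d : ℝ) * (j:ℝ) * (1/s))) ^ θ =
            (2:ℝ) ^ ((d : ℝ) * (j:ℝ) * (1/s - 1/t)) := by
          rw [← Real.rpow_mul (by norm_num : (0:ℝ) ≤ 2)]
          congr 1
          rw [hθ]
          field_simp
        rw [h2half]
        apply mul_le_mul_of_nonneg_right _ (by positivity)
        calc C ^ θ ≤ C ^ (1:ℝ) := Real.rpow_le_rpow_of_exponent_le hC1 hθ1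
        _ = C := Real.rpow_one C

end MainProof
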